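/- arXiv:1501.02606 — 2 statements merged into one kernel-verified Lean document; each statement's English description precedes it below -/
import Mathlib

section
/- Let x = (x_n)_{n≥2} and y = (y_n)_{n≥2} be sequences with x_n, y_n ∈ {1,…,n}. Suppose there exist C ≥ 0, λ ≥ 1, a C-net A ⊆ M_x with P⁺_{x,2} ∈ A, a C-net B ⊆ M_y with P⁺_{y,2} ∈ B, and a λ-bi-Lipschitz bijection φ : A → B with φ(P⁺_{x,2}) = P⁺_{y,2}. Then sup_{n≥2} |x_n − y_n| < ∞. -/
noncomputable section

/-- The tree distance on `ℝ²`. -/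
def treeDist (p q : ℝ × ℝ) : ℝ :=
  if p.1 = q.1 then |p.2 - q.2| else |p.2| + |p.1 - q.1| + |q.2|

/-- `∑_{i=2}^n e^{i²}`. -/
def expSum (n : ℕ) : ℝ := ∑ i ∈ Finset.Icc 2 n, Real.exp ((i : ℝ) ^ 2)

/-- `P⁺_{x,n} = (∑_{i=2}^n e^{i²}, e^{x_n})`. -/
def Pp (x : ℕ → ℕ) (n : ℕ) : ℝ × ℝ := (expSum n, Real.exp (x n))

/-- `P⁻_{x,n} = (∑_{i=2}^n e^{i²}, −e^{x_n})`. -/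
def Pm (x : ℕ → ℕ) (n : ℕ) : ℝ × ℝ := (expSum n, -Real.exp (x n))

/-- `M_{x,n} = {P⁺_{x,n}, P⁻_{x,n}}`. -/
def Mpart (x : ℕ → ℕ) (n : ℕ) : Set (ℝ × ℝ) := {Pp x n, Pm x n}

/-- `M_x = ⋃_{n≥2} M_{x,n}`. -/
def Mset (x : ℕ → ℕ) : Set (ℝ × ℝ) := ⋃ n ∈ {m : ℕ | 2 ≤ m}, Mpart x n

/-- `x = (x_n)_{n≥2}` is a sequence with `x_n ∈ {1,…,n}`. -/
def SeqOK (x : ℕ → ℕ) : Prop := ∀ n, 2 ≤ n → 1 ≤ x n ∧ x n ≤ n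

/-- `A` is a `C`-net in `(M_x, d_x)`: `A ⊆ M_x` and every point of `M_x` is at
distance (infimum) at most `C` from `A`. -/
def IsNet (x : ℕ → ℕ) (C : ℝ) (A : Set (ℝ × ℝ)) : Prop :=
  A ⊆ Mset x ∧ ∀ p ∈ Mset x, ∀ ε > 0, ∃ a ∈ A, treeDist p a ≤ C + ε

/-- `φ : A → B` is a `λ`-bi-Lipschitz bijection. -/
def IsBiLipOn (lam : ℝ) (A B : Set (ℝ × ℝ)) (φ : ℝ × ℝ → ℝ × ℝ) : Prop :=
  Set.BijOn φ A B ∧ ∀ p ∈ A, ∀ q ∈ A,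
    lam⁻¹ * treeDist p q ≤ treeDist (φ p) (φ q) ∧
    treeDist (φ p) (φ q) ≤ lam * treeDist p q


lemma expSum_eq_Ioc (n : ℕ) : expSum n = ∑ i ∈ Finset.Ioc 1 n, Real.exp ((i : ℝ) ^ 2) := by
  rw [expSum, ← Finset.Icc_add_one_left_eq_Ioc]; rfl

lemma expSum_nonneg (n : ℕ) : 0 ≤ expSum n :=
  Finset.sum_nonneg fun i _ => (Real.exp_pos _).le

lemma expSum_gap {m n : ℕ} (hm : 1 ≤ m) (hmn : m < n) :
    expSum m + Real.exp ((n : ℝ) ^ 2) ≤ expSum n := by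
  rw [expSum_eq_Ioc, expSum_eq_Ioc]
  rw [← Finset.sum_Ioc_consecutive _ (by omega : 1 ≤ m) (le_of_lt hmn)]
  have h : Real.exp ((n : ℝ) ^ 2) ≤ ∑ i ∈ Finset.Ioc m n, Real.exp ((i : ℝ) ^ 2) :=
    Finset.single_le_sum (f := fun i : ℕ => Real.exp ((i : ℝ) ^ 2))
      (fun i _ => (Real.exp_pos _).le) (Finset.mem_Ioc.mpr ⟨hmn, le_rfl⟩)
  linarith

lemma expSum_le (n : ℕ) : expSum n ≤ (n : ℝ) * Real.exp ((n : ℝ) ^ 2) := by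
  have h1 : expSum n ≤ (Finset.Icc 2 n).card • Real.exp ((n : ℝ) ^ 2) := by
    refine Finset.sum_le_card_nsmul _ _ _ ?_
    intro i hi
    simp only [Finset.mem_Icc] at hi
    refine Real.exp_le_exp.mpr ?_
    have : (i : ℝ) ≤ n := Nat.cast_le.mpr hi.2
    nlinarith [Nat.cast_nonneg (α := ℝ) i]
  rw [nsmul_eq_mul] at h1
  have h2 : ((Finset.Icc 2 n).card : ℝ) ≤ n := by
    rw [Nat.card_Icc]; exact_mod_cast Nat.le_of_lt_succ (by omega : n + 1 - 2 < n + 1)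
  nlinarith [Real.exp_pos ((n:ℝ)^2)]

lemma exp_sq_le_expSum {n : ℕ} (hn : 2 ≤ n) : Real.exp ((n : ℝ) ^ 2) ≤ expSum n := by
  rw [expSum]
  exact Finset.single_le_sum (f := fun i : ℕ => Real.exp ((i : ℝ) ^ 2))
    (fun i _ => (Real.exp_pos _).le) (Finset.mem_Icc.mpr ⟨hn, le_rfl⟩)

lemma mem_Mpart {x : ℕ → ℕ} {n : ℕ} {p : ℝ × ℝ} (hp : p ∈ Mpart x n) :
    p.1 = expSum n ∧ |p.2| = Real.exp (x n) := by
  rcases hp with h | h <;> subst h <;>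
    simp [Pp, Pm, abs_of_pos (Real.exp_pos _)]

lemma mem_Mset {x : ℕ → ℕ} {p : ℝ × ℝ} (hp : p ∈ Mset x) :
    ∃ n, 2 ≤ n ∧ p ∈ Mpart x n := by
  simp only [Mset, Set.mem_iUnion, Set.mem_setOf_eq] at hp
  obtain ⟨n, hn, hmem⟩ := hp
  exact ⟨n, hn, hmem⟩

lemma Mpart_subset_Mset {x : ℕ → ℕ} {n : ℕ} (hn : 2 ≤ n) : Mpart x n ⊆ Mset x := by
  intro p hp
  simp only [Mset, Set.mem_iUnion, Set.mem_setOf_eq]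
  exact ⟨n, hn, hp⟩

lemma exp_xn_le {x : ℕ → ℕ} (hx : SeqOK x) {n : ℕ} (hn : 2 ≤ n) :
    Real.exp (x n) ≤ Real.exp ((n : ℝ) ^ 2) := by
  refine Real.exp_le_exp.mpr ?_
  have h1 : (x n : ℝ) ≤ n := Nat.cast_le.mpr (hx n hn).2
  have h2 : (2 : ℝ) ≤ n := by exact_mod_cast hn
  nlinarith

/-- Points in distinct columns are far apart. -/
lemma sep {x : ℕ → ℕ} {n m : ℕ} (hn : 2 ≤ n) (hm : 2 ≤ m) (hne : m ≠ n)
    {p q : ℝ × ℝ} (hp : p ∈ Mpart x n) (hq : q ∈ Mpart x m) :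
    Real.exp ((n : ℝ) ^ 2) ≤ treeDist p q := by
  obtain ⟨hp1, hp2⟩ := mem_Mpart hp
  obtain ⟨hq1, hq2⟩ := mem_Mpart hq
  have hgap : Real.exp ((n : ℝ) ^ 2) ≤ |expSum n - expSum m| := by
    rcases lt_or_gt_of_ne hne with h | h
    · have := expSum_gap (by omega : 1 ≤ m) h
      rw [abs_of_pos (by linarith [Real.exp_pos ((n:ℝ)^2)])]
      linarith
    · have := expSum_gap (by omega : 1 ≤ n) h
      have hmono : Real.exp ((n : ℝ) ^ 2) ≤ Real.exp ((m : ℝ) ^ 2) := by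
        refine Real.exp_le_exp.mpr ?_
        have : (n : ℝ) ≤ m := Nat.cast_le.mpr h.le
        nlinarith [Nat.cast_nonneg (α := ℝ) n]
      rw [abs_of_neg (by linarith [Real.exp_pos ((m:ℝ)^2)])]
      linarith
  have hne' : p.1 ≠ q.1 := by
    rw [hp1, hq1]
    intro hcontra
    rw [hcontra] at hgap
    simp at hgap
    linarith [Real.exp_pos ((n:ℝ)^2), hgap]
  rw [treeDist, if_neg hne']
  rw [hp1, hq1] at *
  have := abs_nonneg p.2
  have := abs_nonneg q.2
  linarith

/-- Distance to the basepoint from a point in column `n ≥ 3`. -/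
lemma dist_base_eq {x : ℕ → ℕ} {n : ℕ} (hn : 3 ≤ n) {p : ℝ × ℝ} (hp : p ∈ Mpart x n) :
    treeDist p (Pp x 2) = Real.exp (x n) + (expSum n - expSum 2) + Real.exp (x 2) := by
  obtain ⟨hp1, hp2⟩ := mem_Mpart hp
  have hgap := expSum_gap (by omega : 1 ≤ 2) (by omega : 2 < n)
  have hpos : (0:ℝ) < expSum n - expSum 2 := by linarith [Real.exp_pos ((n:ℝ)^2)]
  have hne : p.1 ≠ (Pp x 2).1 := by
    rw [hp1]; simp only [Pp]; intro hcontra; rw [hcontra] at hpos; linarith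
  rw [treeDist, if_neg hne, hp1, hp2]
  simp only [Pp]
  rw [abs_of_pos hpos, abs_of_pos (Real.exp_pos _)]

lemma dist_base_lb {x : ℕ → ℕ} {n : ℕ} (hn : 3 ≤ n) {p : ℝ × ℝ} (hp : p ∈ Mpart x n) :
    Real.exp ((n : ℝ) ^ 2) ≤ treeDist p (Pp x 2) := by
  rw [dist_base_eq hn hp]
  have hgap := expSum_gap (by omega : 1 ≤ 2) (by omega : 2 < n)
  linarith [Real.exp_pos (x n : ℝ), Real.exp_pos (x 2 : ℝ)]

lemma dist_base_ub {x : ℕ → ℕ} (hx : SeqOK x) {n : ℕ} (hn : 2 ≤ n) {p : ℝ × ℝ}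
    (hp : p ∈ Mpart x n) :
    treeDist p (Pp x 2) ≤ 3 * ((n : ℝ) * Real.exp ((n : ℝ) ^ 2)) := by
  obtain ⟨hp1, hp2⟩ := mem_Mpart hp
  have hbound : Real.exp (x n) ≤ Real.exp ((n:ℝ)^2) := exp_xn_le hx hn
  have hS : Real.exp ((n:ℝ)^2) ≤ expSum n := exp_sq_le_expSum hn
  have hSle : expSum n ≤ (n : ℝ) * Real.exp ((n:ℝ)^2) := expSum_le n
  rcases eq_or_lt_of_le hn with heq | hlt
  · -- n = 2
    subst heq
    have h2 : p.1 = (Pp x 2).1 := by rw [hp1]; rfl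
    rw [treeDist, if_pos h2]
    have habs : |p.2 - (Pp x 2).2| ≤ |p.2| + |(Pp x 2).2| := abs_sub _ _
    have h4 : |(Pp x 2).2| = Real.exp (x 2) := by
      simp [Pp, abs_of_pos (Real.exp_pos _)]
    rw [hp2, h4] at habs
    have hx2 : Real.exp (x 2) ≤ Real.exp (((2:ℕ):ℝ)^2) := exp_xn_le hx le_rfl
    have he := Real.exp_pos (((2:ℕ):ℝ)^2)
    push_cast at *
    nlinarith
  · have h3 : 3 ≤ n := hlt
    rw [dist_base_eq h3 hp]
    have hx2 : Real.exp (x 2) ≤ Real.exp ((2:ℕ):ℝ) := by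
      refine Real.exp_le_exp.mpr ?_
      exact_mod_cast (hx 2 le_rfl).2
    have h22 : Real.exp ((2:ℕ):ℝ) ≤ Real.exp (((2:ℕ):ℝ)^2) := by
      refine Real.exp_le_exp.mpr (by norm_num)
    have hS2 : Real.exp (((2:ℕ):ℝ)^2) ≤ expSum 2 := exp_sq_le_expSum le_rfl
    have hS2n : expSum 2 ≤ expSum n := by
      have := expSum_gap (by omega : 1 ≤ 2) (by omega : 2 < n)
      linarith [Real.exp_pos ((n:ℝ)^2)]
    have hn1 : (1:ℝ) ≤ n := by exact_mod_cast (by omega : 1 ≤ n)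
    have he := Real.exp_pos ((n:ℝ)^2)
    have hsn := expSum_nonneg 2
    nlinarith

/-- Pair distance within a column. -/
lemma pair_dist {x : ℕ → ℕ} {n : ℕ} {p q : ℝ × ℝ} (hp : p ∈ Mpart x n) (hq : q ∈ Mpart x n)
    (hne : p ≠ q) : treeDist p q = 2 * Real.exp (x n) := by
  have he := Real.exp_pos (x n : ℝ)
  rcases hp with hp | hp <;> rcases hq with hq | hq <;> subst hp <;> subst hq
  · exact absurd rfl hne
  · simp only [treeDist, Pp, Pm, if_pos rfl]
    rw [sub_neg_eq_add, abs_of_pos (by linarith)]; ring_nf; simp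
  · simp only [treeDist, Pp, Pm, if_pos rfl]
    rw [abs_of_neg (by linarith : -Real.exp ((x n : ℕ) : ℝ) - Real.exp ((x n : ℕ) : ℝ) < 0)]
    ring_nf; simp
  · exact absurd rfl hne

lemma Pp_ne_Pm (x : ℕ → ℕ) (n : ℕ) : Pp x n ≠ Pm x n := by
  intro h
  have := congrArg Prod.snd h
  simp only [Pp, Pm] at this
  linarith [Real.exp_pos (x n : ℝ)]

/-- If distances to basepoints are `λ`-comparable, columns agree (for `n` large). -/
lemma col_eq {x y : ℕ → ℕ} (hx : SeqOK x) (hy : SeqOK y) {lam : ℝ} (hlam : 1 ≤ lam)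
    {n m : ℕ} (hn : 3 ≤ n) (hm : 2 ≤ m)
    (hgrow : 3 * lam * n ≤ Real.exp (2 * (n : ℝ) - 1))
    {a b : ℝ × ℝ} (ha : a ∈ Mpart x n) (hb : b ∈ Mpart y m)
    (h1 : lam⁻¹ * treeDist a (Pp x 2) ≤ treeDist b (Pp y 2))
    (h2 : treeDist b (Pp y 2) ≤ lam * treeDist a (Pp x 2)) : m = n := by
  have hlam0 : (0:ℝ) < lam := by linarith
  have hda_lb : Real.exp ((n : ℝ) ^ 2) ≤ treeDist a (Pp x 2) := dist_base_lb hn ha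
  have hda_ub : treeDist a (Pp x 2) ≤ 3 * ((n : ℝ) * Real.exp ((n : ℝ) ^ 2)) :=
    dist_base_ub hx (by omega) ha
  have hdb_ub : treeDist b (Pp y 2) ≤ 3 * ((m : ℝ) * Real.exp ((m : ℝ) ^ 2)) :=
    dist_base_ub hy hm hb
  rcases lt_trichotomy m n with hlt | heq | hgt
  · exfalso
    -- treeDist a base ≤ lam * treeDist b base ≤ lam * 3 m e^{m²} ≤ 3 lam (n-1) e^{(n-1)²}
    have hmn1 : (m : ℝ) ≤ (n : ℝ) - 1 := by
      have : (m:ℝ) + 1 ≤ n := by exact_mod_cast (by omega : m + 1 ≤ n)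
      linarith
    have hm0 : (0:ℝ) ≤ m := Nat.cast_nonneg m
    have hexpm : Real.exp ((m : ℝ) ^ 2) ≤ Real.exp (((n : ℝ) - 1) ^ 2) := by
      refine Real.exp_le_exp.mpr ?_
      nlinarith
    have hchain : treeDist b (Pp y 2) ≤ 3 * (((n:ℝ) - 1) * Real.exp (((n:ℝ)-1)^2)) := by
      have hep := Real.exp_pos ((m:ℝ)^2)
      nlinarith
    -- also e^{n²} ≤ lam * treeDist b base
    have hkey : Real.exp ((n:ℝ)^2) ≤ lam * treeDist b (Pp y 2) := by
      have := mul_le_mul_of_nonneg_left h1 hlam0.le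
      rw [← mul_assoc, mul_inv_cancel₀ hlam0.ne', one_mul] at this
      linarith
    have hfin : Real.exp ((n:ℝ)^2) < Real.exp (2*(n:ℝ)-1) * Real.exp (((n:ℝ)-1)^2) := by
      have hep := Real.exp_pos (((n:ℝ)-1)^2)
      have hn3 : (3:ℝ) ≤ n := by exact_mod_cast hn
      have h3 : lam * (3 * (((n:ℝ)-1) * Real.exp (((n:ℝ)-1)^2))) <
          3 * lam * (n:ℝ) * Real.exp (((n:ℝ)-1)^2) := by nlinarith
      have h4 : 3 * lam * (n:ℝ) * Real.exp (((n:ℝ)-1)^2) ≤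
          Real.exp (2*(n:ℝ)-1) * Real.exp (((n:ℝ)-1)^2) :=
        mul_le_mul_of_nonneg_right hgrow hep.le
      calc Real.exp ((n:ℝ)^2) ≤ lam * treeDist b (Pp y 2) := hkey
        _ ≤ lam * (3 * (((n:ℝ)-1) * Real.exp (((n:ℝ)-1)^2))) :=
            mul_le_mul_of_nonneg_left hchain hlam0.le
        _ < _ := lt_of_lt_of_le h3 h4
    rw [← Real.exp_add (2*(n:ℝ)-1) (((n:ℝ)-1)^2)] at hfin
    have := Real.exp_lt_exp.mp hfin
    nlinarith
  · exact heq
  · exfalso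
    have hm3 : 3 ≤ m := by omega
    have hdb_lb : Real.exp ((m:ℝ)^2) ≤ treeDist b (Pp y 2) := dist_base_lb hm3 hb
    have hmono : Real.exp (((n:ℝ)+1)^2) ≤ Real.exp ((m:ℝ)^2) := by
      refine Real.exp_le_exp.mpr ?_
      have h5 : (n:ℝ) + 1 ≤ m := by exact_mod_cast (by omega : n + 1 ≤ m)
      nlinarith [Nat.cast_nonneg (α := ℝ) n]
    have hfin : Real.exp (((n:ℝ)+1)^2) ≤ Real.exp (2*(n:ℝ)-1) * Real.exp ((n:ℝ)^2) := by
      have hep := Real.exp_pos ((n:ℝ)^2)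
      calc Real.exp (((n:ℝ)+1)^2) ≤ treeDist b (Pp y 2) := le_trans hmono hdb_lb
        _ ≤ lam * treeDist a (Pp x 2) := h2
        _ ≤ lam * (3 * ((n:ℝ) * Real.exp ((n:ℝ)^2))) :=
            mul_le_mul_of_nonneg_left hda_ub hlam0.le
        _ = (3 * lam * (n:ℝ)) * Real.exp ((n:ℝ)^2) := by ring
        _ ≤ Real.exp (2*(n:ℝ)-1) * Real.exp ((n:ℝ)^2) :=
            mul_le_mul_of_nonneg_right hgrow hep.le
    rw [← Real.exp_add (2*(n:ℝ)-1) ((n:ℝ)^2)] at hfin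
    have := Real.exp_le_exp.mp hfin
    nlinarith

lemma net_snap {x : ℕ → ℕ} {C : ℝ} {A : Set (ℝ × ℝ)} (hA : IsNet x C A) {n : ℕ} (hn : 2 ≤ n)
    (hbig : C + 1 < Real.exp ((n : ℝ) ^ 2)) {p : ℝ × ℝ} (hp : p ∈ Mpart x n) :
    ∃ a ∈ A, a ∈ Mpart x n ∧ treeDist p a ≤ C + 1 := by
  obtain ⟨a, haA, hd⟩ := hA.2 p (Mpart_subset_Mset hn hp) 1 one_pos
  obtain ⟨m, hm2, ham⟩ := mem_Mset (hA.1 haA)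
  by_cases hmn : m = n
  · subst hmn; exact ⟨a, haA, ham, hd⟩
  · exact absurd hd (by push_neg; linarith [sep hn hm2 hmn hp ham])

/-- Claim 3 of the paper: if there is a pointed `λ`-bi-Lipschitz bijection between
pointed `C`-nets of `M_x` and `M_y`, then `sup_{n≥2} |x_n − y_n| < ∞`. -/
theorem bounded_diff_of_biLip (x y : ℕ → ℕ) (hx : SeqOK x) (hy : SeqOK y)
    (h : ∃ (C lam : ℝ) (A B : Set (ℝ × ℝ)) (φ : ℝ × ℝ → ℝ × ℝ),
      0 ≤ C ∧ 1 ≤ lam ∧ IsNet x C A ∧ Pp x 2 ∈ A ∧ IsNet y C B ∧ Pp y 2 ∈ B ∧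
      IsBiLipOn lam A B φ ∧ φ (Pp x 2) = Pp y 2) :
    ∃ D : ℝ, ∀ n, 2 ≤ n → |(x n : ℝ) - (y n : ℝ)| ≤ D := by
  obtain ⟨C, lam, A, B, φ, hC, hlam, hAnet, hbaseA, hBnet, hbaseB, hbiLip, hφbase⟩ := h
  have hlam0 : (0:ℝ) < lam := by linarith
  obtain ⟨N0, hN0⟩ := exists_nat_gt (max (C+1) (3*lam))
  have hN0C : C + 1 < (N0:ℝ) := lt_of_le_of_lt (le_max_left _ _) hN0
  have hN0lam : 3*lam < (N0:ℝ) := lt_of_le_of_lt (le_max_right _ _) hN0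
  set N := N0 + 3 with hNdef
  refine ⟨max (2*(N:ℝ)) (max (Real.log lam) (2 * Real.log (C+1))), ?_⟩
  intro n hn
  by_cases hnN : n < N
  · have hx2 := (hx n hn).2
    have hy2 := (hy n hn).2
    have h1 : (x n : ℝ) ≤ N := by exact_mod_cast le_trans hx2 (by omega)
    have h2 : (y n : ℝ) ≤ N := by exact_mod_cast le_trans hy2 (by omega)
    have h3 : (0:ℝ) ≤ x n := Nat.cast_nonneg _
    have h4 : (0:ℝ) ≤ y n := Nat.cast_nonneg _
    refine le_trans ?_ (le_max_left _ _)
    rw [abs_sub_le_iff]; constructor <;> linarith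
  · push_neg at hnN
    have hn3 : 3 ≤ n := by omega
    have hn3R : (3:ℝ) ≤ n := by exact_mod_cast hn3
    have hnR : (N0:ℝ) + 3 ≤ n := by exact_mod_cast hnN
    have hbig : C + 1 < Real.exp ((n:ℝ)^2) := by
      have h1 : (n:ℝ)^2 + 1 ≤ Real.exp ((n:ℝ)^2) := Real.add_one_le_exp _
      nlinarith
    have hgrow : 3 * lam * n ≤ Real.exp (2*(n:ℝ)-1) := by
      have e1 : (n:ℝ) - 1 + 1 ≤ Real.exp ((n:ℝ)-1) := Real.add_one_le_exp _
      have e2 : (n:ℝ) + 1 ≤ Real.exp ((n:ℝ)) := Real.add_one_le_exp _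
      have hA1 : (n:ℝ) ≤ Real.exp ((n:ℝ)-1) := by linarith
      have hA2 : 3*lam ≤ Real.exp ((n:ℝ)) := by linarith
      have hmul : (n:ℝ) * (3*lam) ≤ Real.exp ((n:ℝ)-1) * Real.exp ((n:ℝ)) :=
        mul_le_mul hA1 hA2 (by linarith) (by linarith [Real.exp_pos ((n:ℝ)-1)])
      rw [← Real.exp_add] at hmul
      have heq : (n:ℝ) - 1 + n = 2*(n:ℝ) - 1 := by ring
      rw [heq] at hmul
      linarith [hmul]
    -- snap net points to the two columns
    obtain ⟨ap, hapA, hapcol, hapd⟩ :=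
      net_snap hAnet (by omega) hbig (Or.inl rfl : Pp x n ∈ Mpart x n)
    obtain ⟨am, hamA, hamcol, hamd⟩ :=
      net_snap hAnet (by omega) hbig (Or.inr rfl : Pm x n ∈ Mpart x n)
    obtain ⟨bp, hbpB, hbpcol, hbpd⟩ :=
      net_snap hBnet (by omega) hbig (Or.inl rfl : Pp y n ∈ Mpart y n)
    obtain ⟨bm, hbmB, hbmcol, hbmd⟩ :=
      net_snap hBnet (by omega) hbig (Or.inr rfl : Pm y n ∈ Mpart y n)
    -- forward column preservation
    have himg : ∀ a ∈ A, a ∈ Mpart x n → φ a ∈ Mpart y n := by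
      intro a haA hacol
      have hφaB : φ a ∈ B := hbiLip.1.mapsTo haA
      obtain ⟨m, hm2, hφm⟩ := mem_Mset (hBnet.1 hφaB)
      obtain ⟨hle, hge⟩ := hbiLip.2 a haA (Pp x 2) hbaseA
      rw [hφbase] at hle hge
      have := col_eq hx hy hlam hn3 hm2 hgrow hacol hφm hle hge
      rwa [this] at hφm
    -- backward column preservation
    have hpre : ∀ b' ∈ B, b' ∈ Mpart y n → ∃ a ∈ A, a ∈ Mpart x n ∧ φ a = b' := by
      intro b' hb'B hb'col
      obtain ⟨a, haA, hφa⟩ := hbiLip.1.surjOn hb'B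
      obtain ⟨m, hm2, hacol⟩ := mem_Mset (hAnet.1 haA)
      obtain ⟨hle, hge⟩ := hbiLip.2 a haA (Pp x 2) hbaseA
      rw [hφbase, hφa] at hle hge
      have h1' : lam⁻¹ * treeDist b' (Pp y 2) ≤ treeDist a (Pp x 2) :=
        (inv_mul_le_iff₀ hlam0).mpr hge
      have h2' : treeDist a (Pp x 2) ≤ lam * treeDist b' (Pp y 2) :=
        (inv_mul_le_iff₀ hlam0).mp hle
      have := col_eq hy hx hlam hn3 hm2 hgrow hb'col hacol h1' h2'
      exact ⟨a, haA, by rwa [this] at hacol, hφa⟩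
    -- pair argument
    have hpair : ∀ a a' : ℝ × ℝ, a ∈ A → a' ∈ A → a ∈ Mpart x n → a' ∈ Mpart x n → a ≠ a' →
        |(x n : ℝ) - y n| ≤ Real.log lam := by
      intro a a' haA ha'A hacol ha'col hne
      have hfa := himg a haA hacol
      have hfa' := himg a' ha'A ha'col
      have hfne : φ a ≠ φ a' := fun hcontra => hne (hbiLip.1.injOn haA ha'A hcontra)
      have hd1 : treeDist a a' = 2 * Real.exp (x n) := pair_dist hacol ha'col hne
      have hd2 : treeDist (φ a) (φ a') = 2 * Real.exp (y n) := pair_dist hfa hfa' hfne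
      obtain ⟨hle, hge⟩ := hbiLip.2 a haA a' ha'A
      rw [hd1, hd2] at hle hge
      have hxy : (y n : ℝ) ≤ Real.log lam + x n := by
        have h0 : Real.exp (y n) ≤ lam * Real.exp (x n) := by linarith
        have h2 : lam * Real.exp (x n) = Real.exp (Real.log lam + x n) := by
          rw [Real.exp_add, Real.exp_log hlam0]
        rw [h2] at h0
        exact Real.exp_le_exp.mp h0
      have hyx : (x n : ℝ) ≤ Real.log lam + y n := by
        have h0 : Real.exp (x n) ≤ lam * Real.exp (y n) := by
          have h3 : 2 * Real.exp ((x n : ℕ) : ℝ) ≤ lam * (2 * Real.exp ((y n : ℕ) : ℝ)) :=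
            (inv_mul_le_iff₀ hlam0).mp hle
          linarith
        have h2 : lam * Real.exp (y n) = Real.exp (Real.log lam + y n) := by
          rw [Real.exp_add, Real.exp_log hlam0]
        rw [h2] at h0
        exact Real.exp_le_exp.mp h0
      rw [abs_sub_le_iff]; constructor <;> linarith
    refine le_trans ?_ (le_max_right _ _)
    by_cases hcase1 : ap = am
    · obtain ⟨a1, ha1A, ha1col, ha1φ⟩ := hpre bp hbpB hbpcol
      obtain ⟨a2, ha2A, ha2col, ha2φ⟩ := hpre bm hbmB hbmcol
      by_cases hcase2 : bp = bm
      · -- both singletons: small exponents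
        have hxsmall : 2 * Real.exp (x n) ≤ C + 1 := by
          rcases hapcol with h | h
          · have heq2 : treeDist (Pm x n) am = 2 * Real.exp (x n) := by
              rw [← hcase1, h]
              exact pair_dist (Or.inr rfl) (Or.inl rfl) (Ne.symm (Pp_ne_Pm x n))
            linarith [hamd]
          · have heq2 : treeDist (Pp x n) ap = 2 * Real.exp (x n) := by
              rw [h]
              exact pair_dist (Or.inl rfl) (Or.inr rfl) (Pp_ne_Pm x n)
            linarith [hapd]
        have hysmall : 2 * Real.exp (y n) ≤ C + 1 := by
          rcases hbpcol with h | h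
          · have heq2 : treeDist (Pm y n) bm = 2 * Real.exp (y n) := by
              rw [← hcase2, h]
              exact pair_dist (Or.inr rfl) (Or.inl rfl) (Ne.symm (Pp_ne_Pm y n))
            linarith [hbmd]
          · have heq2 : treeDist (Pp y n) bp = 2 * Real.exp (y n) := by
              rw [h]
              exact pair_dist (Or.inl rfl) (Or.inr rfl) (Pp_ne_Pm y n)
            linarith [hbpd]
        refine le_trans ?_ (le_max_right _ _)
        have hCpos : (0:ℝ) < C + 1 := by linarith
        have hxlog : (x n : ℝ) ≤ Real.log (C+1) := by
          rw [Real.le_log_iff_exp_le hCpos]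
          linarith [Real.exp_pos ((x n : ℕ) : ℝ)]
        have hylog : (y n : ℝ) ≤ Real.log (C+1) := by
          rw [Real.le_log_iff_exp_le hCpos]
          linarith [Real.exp_pos ((y n : ℕ) : ℝ)]
        have hx0 : (0:ℝ) ≤ x n := Nat.cast_nonneg _
        have hy0 : (0:ℝ) ≤ y n := Nat.cast_nonneg _
        rw [abs_sub_le_iff]; constructor <;> linarith
      · have hane : a1 ≠ a2 := fun hc => hcase2 (by rw [← ha1φ, ← ha2φ, hc])
        exact le_trans (hpair a1 a2 ha1A ha2A ha1col ha2col hane) (le_max_left _ _)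
    · exact le_trans (hpair ap am hapA hamA hapcol hamcol hcase1) (le_max_left _ _)
end
end

section
/- Let x = (x_n)_{n≥2} and y = (y_n)_{n≥2} be sequences with x_n, y_n ∈ {1,…,n}. If there exists a bijective isometry φ : (M_x, d_x) → (M_y, d_y) with φ(P⁺_{x,2}) = P⁺_{y,2}, then x = y, i.e., x_n = y_n for all n ≥ 2. -/
noncomputable section

lemma expSum_mono : Monotone expSum := by
  intro m n h
  exact Finset.sum_le_sum_of_subset_of_nonneg (Finset.Icc_subset_Icc_right h)
    (fun i _ _ => (Real.exp_pos _).le)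

lemma expSum_lt {m n : ℕ} (h2 : 2 ≤ n) (h : m < n) : expSum m < expSum n := by
  refine Finset.sum_lt_sum_of_subset (Finset.Icc_subset_Icc_right h.le)
    (i := n) ?_ ?_ (Real.exp_pos _) (fun j _ _ => (Real.exp_pos _).le)
  · simp [h2]
  · simp only [Finset.mem_Icc]; omega

lemma expSum_succ {n : ℕ} (h : 1 ≤ n) :
    expSum (n+1) = expSum n + Real.exp (((n:ℝ)+1) ^ 2) := by
  unfold expSum
  rw [Finset.sum_Icc_succ_top (by omega : 2 ≤ n + 1)]
  push_cast
  ring_nf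

lemma two_lt_exp_one : (2:ℝ) < Real.exp 1 := by
  have := Real.exp_one_gt_d9
  linarith

lemma pair_bound {x : ℕ → ℕ} (hx : SeqOK x) {n : ℕ} (hn : 2 ≤ n) :
    Real.exp (x n) + Real.exp (x 2) < Real.exp (((n:ℝ)+1)^2) := by
  have h1 : Real.exp (x n) ≤ Real.exp n := by
    apply Real.exp_le_exp.2; exact_mod_cast (hx n hn).2
  have h2 : Real.exp (x 2) ≤ Real.exp n := by
    apply Real.exp_le_exp.2
    have := (hx 2 le_rfl).2
    have : x 2 ≤ n := le_trans this hn
    exact_mod_cast this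
  have h3 : Real.exp 1 * Real.exp n = Real.exp (1 + n) := (Real.exp_add 1 n).symm
  have h4 : Real.exp (1 + (n:ℝ)) ≤ Real.exp (((n:ℝ)+1)^2) := by
    apply Real.exp_le_exp.2
    nlinarith [Nat.cast_nonneg (α := ℝ) n]
  nlinarith [Real.exp_pos ((n:ℝ)), two_lt_exp_one]

lemma dist_base {x : ℕ → ℕ} (hx : SeqOK x) {n : ℕ} (hn : 2 ≤ n)
    {p : ℝ × ℝ} (hp : p ∈ Mpart x n) :
    expSum n - expSum 2 ≤ treeDist p (Pp x 2) ∧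
    treeDist p (Pp x 2) < expSum (n+1) - expSum 2 := by
  have hsucc : expSum (n+1) = expSum n + Real.exp (((n:ℝ)+1)^2) :=
    expSum_succ (by omega)
  have hpb := pair_bound hx hn
  have he1 := Real.exp_pos ((x n : ℝ))
  have he2 := Real.exp_pos ((x 2 : ℝ))
  rcases eq_or_lt_of_le hn with h2 | h3
  · subst h2
    rcases hp with hp | hp <;> subst hp
    · simp only [treeDist, Pp, if_pos rfl, if_true, sub_self, abs_zero]
      constructor <;> [linarith; linarith]
    · simp only [treeDist, Pm, Pp, if_pos rfl, if_true]
      rw [show -Real.exp ((x 2 : ℝ)) - Real.exp ((x 2 : ℝ)) = -(2 * Real.exp (x 2)) by ring,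
        abs_neg, abs_of_pos (by linarith)]
      constructor <;> linarith
  · have hne : expSum n ≠ expSum 2 := ne_of_gt (expSum_lt hn h3)
    have hgt : expSum 2 < expSum n := expSum_lt hn h3
    rcases hp with hp | hp <;> subst hp <;>
      simp only [treeDist, Pp, Pm, if_neg hne] <;>
      rw [abs_of_pos (by linarith : (0:ℝ) < expSum n - expSum 2)]
    · simp only [hne, if_false]
      rw [abs_of_pos he1, abs_of_pos he2]
      constructor <;> linarith
    · simp only [hne, if_false]
      rw [abs_neg, abs_of_pos he1, abs_of_pos he2]
      constructor <;> linarith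

lemma level_eq {x y : ℕ → ℕ} (hx : SeqOK x) (hy : SeqOK y)
    {m n : ℕ} (hm : 2 ≤ m) (hn : 2 ≤ n)
    {p q : ℝ × ℝ} (hp : p ∈ Mpart x m) (hq : q ∈ Mpart y n)
    (h : treeDist p (Pp x 2) = treeDist q (Pp y 2)) : m = n := by
  by_contra hne
  obtain ⟨hl1, hl2⟩ := dist_base hx hm hp
  obtain ⟨hl3, hl4⟩ := dist_base hy hn hq
  rcases Nat.lt_or_ge m n with hlt | hge
  · have : expSum (m+1) ≤ expSum n := expSum_mono (by omega)
    linarith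
  · have hlt : n < m := by omega
    have : expSum (n+1) ≤ expSum m := expSum_mono (by omega)
    linarith

lemma dist_pair_pm (z : ℕ → ℕ) (k : ℕ) :
    treeDist (Pp z k) (Pm z k) = 2 * Real.exp (z k) := by
  have h := Real.exp_pos ((z k : ℝ))
  simp only [treeDist, Pp, Pm, if_pos rfl, if_true, sub_neg_eq_add]
  rw [abs_of_pos (by linarith)]
  ring

lemma dist_pair_mp (z : ℕ → ℕ) (k : ℕ) :
    treeDist (Pm z k) (Pp z k) = 2 * Real.exp (z k) := by
  have h := Real.exp_pos ((z k : ℝ))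
  simp only [treeDist, Pp, Pm, if_pos rfl, if_true]
  rw [show -Real.exp ((z k : ℝ)) - Real.exp ((z k : ℝ)) = -(2 * Real.exp (z k)) by ring,
    abs_neg, abs_of_pos (by linarith)]

/-- If there is a pointed bijective isometry `(M_x, P⁺_{x,2}) → (M_y, P⁺_{y,2})`,
then `x = y`. -/
theorem eq_of_pointed_isometry (x y : ℕ → ℕ) (hx : SeqOK x) (hy : SeqOK y)
    (φ : ℝ × ℝ → ℝ × ℝ) (hbij : Set.BijOn φ (Mset x) (Mset y))
    (hiso : ∀ p ∈ Mset x, ∀ q ∈ Mset x, treeDist (φ p) (φ q) = treeDist p q)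
    (hφ2 : φ (Pp x 2) = Pp y 2) :
    ∀ n, 2 ≤ n → x n = y n := by
  intro n hn
  have memPp : ∀ (z : ℕ → ℕ) (k : ℕ), Pp z k ∈ Mpart z k := fun z k => Or.inl rfl
  have memPm : ∀ (z : ℕ → ℕ) (k : ℕ), Pm z k ∈ Mpart z k := fun z k => Or.inr rfl
  have memM : ∀ (z : ℕ → ℕ) (k : ℕ), 2 ≤ k → ∀ p ∈ Mpart z k, p ∈ Mset z := by
    intro z k hk p hp
    exact Set.mem_biUnion hk hp
  have hchar : ∀ (z : ℕ → ℕ) (p : ℝ × ℝ), p ∈ Mset z → ∃ k, 2 ≤ k ∧ p ∈ Mpart z k := by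
    intro z p hp
    simpa [Mset] using hp
  have stepA : ∀ p ∈ Mpart x n, φ p ∈ Mpart y n := by
    intro p hp
    have hpM : p ∈ Mset x := memM x n hn p hp
    have hφp : φ p ∈ Mset y := hbij.mapsTo hpM
    obtain ⟨m, hm, hmem⟩ := hchar y (φ p) hφp
    have hd : treeDist (φ p) (φ (Pp x 2)) = treeDist p (Pp x 2) :=
      hiso p hpM (Pp x 2) (memM x 2 le_rfl _ (memPp x 2))
    rw [hφ2] at hd
    have : m = n := level_eq hy hx hm hn hmem hp hd
    rwa [← this]
  have hPpM : Pp x n ∈ Mset x := memM x n hn _ (memPp x n)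
  have hPmM : Pm x n ∈ Mset x := memM x n hn _ (memPm x n)
  have hPne : Pp x n ≠ Pm x n := by
    have := Real.exp_pos ((x n : ℝ))
    intro h
    have h2 := congrArg Prod.snd h
    simp only [Pp, Pm] at h2
    linarith
  have hφne : φ (Pp x n) ≠ φ (Pm x n) := fun h => hPne (hbij.injOn hPpM hPmM h)
  have hd : treeDist (φ (Pp x n)) (φ (Pm x n)) = 2 * Real.exp (x n) := by
    rw [hiso _ hPpM _ hPmM, dist_pair_pm]
  have hmem1 := stepA _ (memPp x n)
  have hmem2 := stepA _ (memPm x n)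
  have key : (2:ℝ) * Real.exp (x n) = 2 * Real.exp (y n) := by
    rcases hmem1 with h1 | h1 <;> rcases hmem2 with h2 | h2
    · exact absurd (h1.trans h2.symm) hφne
    · rw [← hd, h1, h2, dist_pair_pm]
    · rw [← hd, h1, h2, dist_pair_mp]
    · exact absurd (h1.trans h2.symm) hφne
  have : Real.exp ((x n : ℝ)) = Real.exp ((y n : ℝ)) := by linarith
  have := Real.exp_injective this
  exact_mod_cast this
end
end
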